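/- Let H be a normal subgroup of π₁(X, x₀) and let X be a locally path-connected space that is H-SLT at x₀. Then H is a closed subgroup of π₁^qtop(X, x₀) if and only if H is a closed subgroup of π₁^wh(X, x₀). -/

import Mathlib

open Set TopologicalSpace unitInterval

universe u

namespace SLTF

attribute [local instance] Path.Homotopic.setoid

variable {X : Type u} [TopologicalSpace X]

/-- The homotopy class of a loop as an element of the fundamental group. -/
noncomputable def fl {x : X} (γ : Path x x) : FundamentalGroup X x :=
  @FundamentalGroup.fromPath X _ x ⟦γ⟧

/-- Multiplication of fundamental-group elements in path-concatenation order: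
`pmul a b` is the class of "`a` followed by `b`". -/
noncomputable def pmul {x : X} (a b : FundamentalGroup X x) : FundamentalGroup X x :=
  @FundamentalGroup.fromPath X _ x
    (Path.Homotopic.Quotient.trans (@FundamentalGroup.toPath X _ x a)
      (@FundamentalGroup.toPath X _ x b))

/-- A path in `X` starting at the base point `x`, recorded together with its end point. -/
structure PPath (X : Type u) [TopologicalSpace X] (x : X) where
  target : X
  path : Path x target

/-- Two paths starting at `x` are identified when they have the same end point and the
class of `α ⬝ β⁻¹` satisfies the predicate `P` (e.g. membership in a subgroup `H`). -/
def HRel (x : X) (P : Path x x → Prop) (α β : PPath X x) : Prop :=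
  ∃ h : α.target = β.target, P (α.path.trans ((β.path.cast rfl h).symm))

/-- The set `X̃` of `P`-equivalence classes of paths starting at `x`. -/
def Xtilde (x : X) (P : Path x x → Prop) : Type u := Quot (HRel x P)

/-- The class of a path in `X̃`. -/
def mkX (x : X) (P : Path x x → Prop) (α : PPath X x) : Xtilde x P := Quot.mk _ α

/-- The basic whisker-open set `([α], U)`: all classes of prolongations of `α` by a path in `U`. -/
def whBasic (x : X) (P : Path x x → Prop) (α : PPath X x) (U : Set X) : Set (Xtilde x P) :=
  { q | ∃ (y : X) (β : Path α.target y), range ⇑β ⊆ U ∧ q = mkX x P ⟨y, α.path.trans β⟩ }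

/-- The whisker topology on `X̃`, generated by the sets `([α], U)` for `U` an open
neighbourhood of the end point of `α`. -/
instance whTop (x : X) (P : Path x x → Prop) : TopologicalSpace (Xtilde x P) :=
  generateFrom
    { S | ∃ (α : PPath X x) (U : Set X), IsOpen U ∧ α.target ∈ U ∧ S = whBasic x P α U }

/-- The endpoint projection `p : X̃ → X`. -/
def endpt (x : X) (P : Path x x → Prop) : Xtilde x P → X :=
  Quot.lift (fun α => α.target) (fun _ _ h => h.elim fun e _ => e)

/-- The space of paths in `X` starting at `x`, with the compact-open topology. -/
def PSp (X : Type u) [TopologicalSpace X] (x : X) : Type u := { f : C(I, X) // f 0 = x }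

instance (x : X) : TopologicalSpace (PSp X x) := instTopologicalSpaceSubtype

/-- The natural surjection from the path space onto `X̃`. -/
def toXt (x : X) (P : Path x x → Prop) : PSp X x → Xtilde x P :=
  fun f => mkX x P ⟨f.1 1, ⟨f.1, f.2, rfl⟩⟩

/-- The quotient of the compact-open topology on `X̃`. -/
def topTop (x : X) (P : Path x x → Prop) : TopologicalSpace (Xtilde x P) :=
  coinduced (toXt x P) inferInstance

/-- Membership in a subgroup `H`, as a predicate on loops. -/
noncomputable def loopMem (x : X) (H : Subgroup (FundamentalGroup X x)) : Path x x → Prop :=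
  fun γ => fl γ ∈ H

/-- `X̃_H`, the classes of paths starting at `x₀` modulo `H`. -/
abbrev XtildeH (x₀ : X) (H : Subgroup (FundamentalGroup X x₀)) : Type u :=
  Xtilde x₀ (loopMem x₀ H)

/-- The fiber of the endpoint projection over `y`, with the subspace (whisker) topology. -/
abbrev Fib (x : X) (P : Path x x → Prop) (y : X) : Type u :=
  { q : Xtilde x P // endpt x P q = y }

/-- The class in the fiber over `y` of a path from `x` to `y`. -/
def mkFib (x : X) (P : Path x x → Prop) {y : X} (δ : Path x y) : Fib x P y :=
  ⟨mkX x P ⟨y, δ⟩, rfl⟩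

/-- The whisker topology on the fundamental group `π₁(X, x)`: basic neighbourhoods of `a`
are the sets `{a ⋆ [γ] : γ a loop in U at x}` for `U` an open neighbourhood of `x`. -/
noncomputable def whPi1 (x : X) : TopologicalSpace (FundamentalGroup X x) :=
  generateFrom
    { S | ∃ (a : FundamentalGroup X x) (U : Set X), IsOpen U ∧ x ∈ U ∧
        S = { b | ∃ γ : Path x x, range ⇑γ ⊆ U ∧ b = pmul a (fl γ) } }

/-- The quotient topology on `π₁(X, x)` induced from the loop space with the
compact-open topology. -/
noncomputable def qtopPi1 (x : X) : TopologicalSpace (FundamentalGroup X x) :=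
  coinduced (fun γ : Path x x => fl γ) inferInstance

/-- `X` is `H`-SLT at `x₀`. -/
noncomputable def IsHSLTAt (x₀ : X) (H : Subgroup (FundamentalGroup X x₀)) : Prop :=
  ∀ (y : X) (α : Path x₀ y) (U : Set X), IsOpen U → x₀ ∈ U →
    ∃ V : Set X, IsOpen V ∧ y ∈ V ∧
      ∀ β : Path y y, range ⇑β ⊆ V →
        ∃ γ : Path x₀ x₀, range ⇑γ ⊆ U ∧
          fl ((α.trans (β.trans α.symm)).trans γ.symm) ∈ H

/-- `X` is SLT at `x`. -/
def IsSLTAt (X : Type u) [TopologicalSpace X] (x : X) : Prop :=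
  ∀ (y : X) (α : Path x y) (U : Set X), IsOpen U → x ∈ U →
    ∃ V : Set X, IsOpen V ∧ y ∈ V ∧
      ∀ β : Path y y, range ⇑β ⊆ V →
        ∃ γ : Path x x, range ⇑γ ⊆ U ∧ (α.trans (β.trans α.symm)).Homotopic γ

/-- `X` is an SLT space. -/
def IsSLT (X : Type u) [TopologicalSpace X] : Prop := ∀ x : X, IsSLTAt X x

/-- `α` (a path from `x` to `y`) is an `H`-SLT path: for every path `lam` from `x₀` to `x`
and open `U ∋ x` there is an open `V ∋ y` such that every loop `β` in `V` at `y` transfers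
to a loop `γ` in `U` at `x` with `[α ⋆ β ⋆ α⁻¹ ⋆ γ⁻¹] ∈ [lam⁻¹ H lam]`, i.e.
`[lam ⋆ (α ⋆ β ⋆ α⁻¹ ⋆ γ⁻¹) ⋆ lam⁻¹] ∈ H`. -/
noncomputable def IsHSLTPath (x₀ : X) (H : Subgroup (FundamentalGroup X x₀)) {x y : X}
    (α : Path x y) : Prop :=
  ∀ (lam : Path x₀ x) (U : Set X), IsOpen U → x ∈ U →
    ∃ V : Set X, IsOpen V ∧ y ∈ V ∧
      ∀ β : Path y y, range ⇑β ⊆ V →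
        ∃ γ : Path x x, range ⇑γ ⊆ U ∧
          fl (lam.trans ((((α.trans (β.trans α.symm)).trans γ.symm)).trans lam.symm)) ∈ H

/-- `X` is an `H`-SLT space: for every `x` and every path `lam` from `x₀` to `x`, `X` is
`[lam⁻¹ H lam]`-SLT at `x`. -/
noncomputable def IsHSLTSpace (x₀ : X) (H : Subgroup (FundamentalGroup X x₀)) : Prop :=
  ∀ (x y : X) (α : Path x y), IsHSLTPath x₀ H α

/-- Membership in the conjugate subgroup `[lam⁻¹ H lam]` of `π₁(X, x)`,
as a predicate on loops at `x`. -/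
noncomputable def conjMem (x₀ : X) (H : Subgroup (FundamentalGroup X x₀)) {x : X}
    (lam : Path x₀ x) : Path x x → Prop :=
  fun δ => fl (lam.trans (δ.trans lam.symm)) ∈ H

/-- `X` is homotopically Hausdorff relative to `H`. -/
noncomputable def HomHausdorffRel (x₀ : X) (H : Subgroup (FundamentalGroup X x₀)) : Prop :=
  ∀ (y : X) (α : Path x₀ y) (g : FundamentalGroup X x₀), g ∉ H →
    ∃ U : Set X, IsOpen U ∧ y ∈ U ∧
      ∀ γ : Path y y, range ⇑γ ⊆ U →
        ¬ ∃ h ∈ H, fl (α.trans (γ.trans α.symm)) = pmul h g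

/-- `X` is homotopically path Hausdorff relative to `H`. -/
noncomputable def HomPathHausdorffRel (x₀ : X) (H : Subgroup (FundamentalGroup X x₀)) : Prop :=
  ∀ (y : X) (α β : Path x₀ y), fl (α.trans β.symm) ∉ H →
    ∃ (n : ℕ) (t : Fin (n + 1) → I) (U : Fin n → Set X),
      t 0 = 0 ∧ t (Fin.last n) = 1 ∧ StrictMono t ∧
      (∀ i : Fin n, IsOpen (U i)) ∧
      (∀ i : Fin n, ⇑α '' Set.Icc (t i.castSucc) (t i.succ) ⊆ U i) ∧
      ∀ γ : Path x₀ y,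
        (∀ i : Fin n, ⇑γ '' Set.Icc (t i.castSucc) (t i.succ) ⊆ U i) →
        (∀ i : Fin (n + 1), γ (t i) = α (t i)) →
        fl (γ.trans β.symm) ∉ H

/-- The endpoint projection `p : X̃ → X` (with the whisker topology on `X̃`) has the
unique path lifting property. -/
def UPLP (x : X) (P : Path x x → Prop) : Prop :=
  ∀ g₁ g₂ : C(I, Xtilde x P), g₁ 0 = g₂ 0 →
    (∀ t, endpt x P (g₁ t) = endpt x P (g₂ t)) → g₁ = g₂

/-- A semicovering map: a local homeomorphism with (continuous) unique lifting of paths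
and of homotopies. -/
structure IsSemicovering {Y : Type u} [TopologicalSpace Y] (p : Y → X) : Prop where
  localHomeo : IsLocalHomeomorph p
  pathLift : ∀ (y : Y) (γ : C(I, X)), γ 0 = p y →
    ∃! γh : C(I, Y), γh 0 = y ∧ ∀ t, p (γh t) = γ t
  contPathLift : ∀ y : Y, ∃ L : { γ : C(I, X) // γ 0 = p y } → C(I, Y),
    Continuous L ∧ ∀ γ, (L γ) 0 = y ∧ ∀ t, p ((L γ) t) = (γ : C(I, X)) t
  homotopyLift : ∀ (y : Y) (Φ : C(I × I, X)), Φ (0, 0) = p y →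
    ∃! Φh : C(I × I, Y), Φh (0, 0) = y ∧ ∀ z, p (Φh z) = Φ z
  contHomotopyLift : ∀ y : Y, ∃ L : { Φ : C(I × I, X) // Φ (0, 0) = p y } → C(I × I, Y),
    Continuous L ∧ ∀ Φ, (L Φ) (0, 0) = y ∧ ∀ z, p ((L Φ) z) = (Φ : C(I × I, X)) z

/-- An `lpc₀`-covering map with `p₊π₁(Y, ·) = H`: a map which is equivalent, as a map
over `X`, to the endpoint projection `p_H : X̃_H → X` having the unique path lifting
property (with `Y` path connected and locally path connected). -/
structure IsLpc0Covering {Y : Type u} [TopologicalSpace Y] (p : Y → X) (x₀ : X)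
    (H : Subgroup (FundamentalGroup X x₀)) : Prop where
  pathConnected : PathConnectedSpace Y
  locPathConnected : LocPathConnectedSpace Y
  uplp : UPLP x₀ (loopMem x₀ H)
  equiv : ∃ φ : Y ≃ₜ XtildeH x₀ H, ∀ y, endpt x₀ (loopMem x₀ H) (φ y) = p y

/-- The homomorphism induced by `p` on fundamental groups, as a function. -/
noncomputable def pStar {Y : Type u} [TopologicalSpace Y] (p : C(Y, X)) (y₀ : Y) :
    FundamentalGroup Y y₀ → FundamentalGroup X (p y₀) :=
  fun g => @FundamentalGroup.fromPath X _ (p y₀)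
    (Path.Homotopic.Quotient.map (@FundamentalGroup.toPath Y _ y₀ g) p)


open CategoryTheory

variable {X : Type u} [TopologicalSpace X]

noncomputable def hq {a b : X} (p : Path a b) :
    FundamentalGroupoid.mk a ⟶ FundamentalGroupoid.mk b := ⟦p⟧

lemma hq_homotopic {a b : X} {p q : Path a b} (h : p.Homotopic q) : hq p = hq q :=
  Quotient.sound h

lemma hq_trans {a b c : X} (p : Path a b) (q : Path b c) :
    hq (p.trans q) = hq p ≫ hq q := rfl

lemma hq_refl (a : X) : hq (Path.refl a) = 𝟙 (FundamentalGroupoid.mk a) := rfl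

lemma hq_symm {a b : X} (p : Path a b) : hq p.symm = inv (hq p) := by
  apply IsIso.eq_inv_of_hom_inv_id
  show hq p ≫ hq p.symm = 𝟙 _
  rw [← hq_trans, ← hq_refl a]
  exact hq_homotopic ⟨(Path.Homotopy.reflTransSymm p).symm⟩


/-- convex combination in the unit interval -/
def cc (a b u : I) : I :=
  ⟨(1 - (u:ℝ)) * a + u * b, by
    constructor
    · nlinarith [a.2.1, b.2.1, u.2.1, u.2.2]
    · nlinarith [a.2.2, b.2.2, u.2.1, u.2.2]⟩

@[simp] lemma cc_zero (a b : I) : cc a b 0 = a := by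
  apply Subtype.ext; simp [cc]

@[simp] lemma cc_one (a b : I) : cc a b 1 = b := by
  apply Subtype.ext; simp [cc]

@[simp] lemma cc_self (a u : I) : cc a a u = a := by
  apply Subtype.ext; simp [cc]; ring

lemma cc_mem_Icc {a b : I} (hab : a ≤ b) (u : I) : cc a b u ∈ Icc a b := by
  constructor
  · rw [← Subtype.coe_le_coe]
    have : (a:ℝ) ≤ b := hab
    simp only [cc]
    nlinarith [u.2.1, u.2.2]
  · rw [← Subtype.coe_le_coe]
    have : (a:ℝ) ≤ b := hab
    simp only [cc]
    nlinarith [u.2.1, u.2.2]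

lemma continuous_cc {Z : Type*} [TopologicalSpace Z] {A B C : Z → I}
    (hA : Continuous A) (hB : Continuous B) (hC : Continuous C) :
    Continuous fun z => cc (A z) (B z) (C z) := by
  apply Continuous.subtype_mk
  fun_prop

/-- The affine path in `I` from `a` to `b`. -/
def sigI (a b : I) : Path a b where
  toFun := fun u => cc a b u
  continuous_toFun := continuous_cc continuous_const continuous_const continuous_id
  source' := cc_zero a b
  target' := cc_one a b

/-- Any two paths in `I` with the same endpoints are homotopic. -/
lemma I_homotopic {a b : I} (p q : Path a b) : p.Homotopic q := by
  refine ⟨⟨⟨⟨fun z => cc (p z.2) (q z.2) z.1, ?_⟩, ?_, ?_⟩, ?_⟩⟩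
  · exact continuous_cc (p.continuous.comp continuous_snd)
      (q.continuous.comp continuous_snd) continuous_fst
  · intro u; simp
  · intro u; simp
  · intro t u hu
    rcases hu with h | h <;> subst h <;> simp

/-- The subpath of `p` from `p a` to `p b` (affinely reparametrized). -/
noncomputable def seg {x y : X} (p : Path x y) (a b : I) : Path (p a) (p b) :=
  (sigI a b).map p.continuous

lemma seg_apply {x y : X} (p : Path x y) (a b u : I) : seg p a b u = p (cc a b u) := rfl

lemma seg_range {x y : X} (p : Path x y) {a b : I} (hab : a ≤ b) :
    range (seg p a b) ⊆ p '' Icc a b := by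
  rintro - ⟨u, rfl⟩
  exact ⟨cc a b u, cc_mem_Icc hab u, rfl⟩

lemma hq_seg_add {x y : X} (p : Path x y) (a b c : I) :
    hq (seg p a c) = hq (seg p a b) ≫ hq (seg p b c) := by
  rw [← hq_trans]
  apply hq_homotopic
  rw [seg, seg, seg, ← Path.map_trans]
  exact Path.Homotopic.map (I_homotopic _ _) ⟨⇑p, p.continuous⟩




lemma hq_congr {a b a' b' : X} {p : Path a b} {p' : Path a' b'} (ha : a = a')
    (hb : b = b') (hp : ∀ u, p u = p' u) :
    hq p = eqToHom (by rw [ha]) ≫ hq p' ≫ eqToHom (by rw [hb]) := by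
  subst ha; subst hb
  simp only [eqToHom_refl, Category.comp_id, Category.id_comp]
  have : p = p' := by ext u; exact hp u
  rw [this]

/-- class of a pointwise-constant path is an `eqToHom`. -/
lemma hq_const {a b : X} (p : Path a b) (h : ∀ u, p u = a) :
    hq p = eqToHom (by rw [← p.target, h 1] :
      FundamentalGroupoid.mk a = FundamentalGroupoid.mk b) := by
  have hb : b = a := by rw [← p.target, h 1]
  rw [hq_congr (rfl : a = a) hb (p' := Path.refl a) (fun u => by rw [h u, Path.refl_apply])]
  have : hq (Path.refl a) = 𝟙 (FundamentalGroupoid.mk a) := rfl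
  rw [this]
  simp

/-- The prefix of a path up to time `t`. -/
noncomputable def pre {x y : X} (p : Path x y) (t : I) : Path x (p t) :=
  (seg p 0 t).cast p.source.symm rfl

lemma pre_apply {x y : X} (p : Path x y) (t u : I) : pre p t u = p (cc 0 t u) := by
  simp [pre, Path.cast_coe, seg_apply]

lemma hq_pre_split {x y : X} (p : Path x y) (a b : I) :
    hq (pre p b) = hq (pre p a) ≫ hq (seg p a b) := by
  have h1 : hq (pre p b) = eqToHom (by rw [p.source] :
      FundamentalGroupoid.mk x = FundamentalGroupoid.mk (p 0)) ≫ hq (seg p 0 b) := by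
    rw [hq_congr (p := pre p b) (p' := seg p 0 b) p.source.symm rfl
      (fun u => by simp [pre_apply, seg_apply])]
    simp
  have h2 : hq (pre p a) = eqToHom (by rw [p.source] :
      FundamentalGroupoid.mk x = FundamentalGroupoid.mk (p 0)) ≫ hq (seg p 0 a) := by
    rw [hq_congr (p := pre p a) (p' := seg p 0 a) p.source.symm rfl
      (fun u => by simp [pre_apply, seg_apply])]
    simp
  rw [h1, h2, hq_seg_add p 0 a b, Category.assoc]

lemma pre_first {x y : X} (p : Path x y) {t : I} (ht : t = 0) (u : I) :
    pre p t u = x := by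
  rw [pre_apply, ht]
  simp [p.source]

lemma pre_last {x y : X} (p : Path x y) {t : I} (ht : t = 1) (u : I) :
    pre p t u = p u := by
  rw [pre_apply, ht]
  congr 1
  apply Subtype.ext
  simp [cc]

lemma hq_pre_last {x y : X} (p : Path x y) {t : I} (ht : t = 1) :
    hq (pre p t) = hq p ≫ eqToHom (by rw [ht, p.target] :
      FundamentalGroupoid.mk y = FundamentalGroupoid.mk (p t)) := by
  rw [hq_congr (p := pre p t) (p' := p) rfl (by rw [ht, p.target]) (pre_last p ht)]
  simp



lemma pmul_eq {x : X} (a b : FundamentalGroup X x) : pmul a b = b * a := rfl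

lemma fl_hom {x : X} (γ : Path x x) : fl γ = hq γ := rfl

lemma fl_eq_of_hq {x : X} {γ δ : Path x x} (h : hq γ = hq δ) : fl γ = fl δ := h

lemma fl_trans {x : X} (γ δ : Path x x) : fl (γ.trans δ) = pmul (fl γ) (fl δ) :=
  rfl

lemma fl_trans' {x : X} (γ δ : Path x x) : fl (γ.trans δ) = fl δ * fl γ := by
  rw [fl_trans, pmul_eq]

lemma fl_refl (x : X) : fl (Path.refl x) = 1 := rfl

lemma fl_symm {x : X} (γ : Path x x) : fl γ.symm = (fl γ)⁻¹ := by
  show hq γ.symm = Groupoid.inv (hq γ)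
  rfl

lemma fl_peel {x : X} (Z γ : Path x x) : fl Z = fl γ * fl (Z.trans γ.symm) := by
  rw [← fl_trans']
  apply fl_eq_of_hq
  simp [hq_trans, hq_symm]

example (x₀ b0 b1 a0 a1 : X) (pb : Path x₀ b0) (bs : Path b0 b1) (pa : Path x₀ a0)
    (sa : Path a0 a1) (η : Path b0 a0) (η' : Path b1 a1) :
    hq ((pb.trans bs).trans (η'.trans (pa.trans sa).symm)) =
    hq ((pb.trans (η.trans pa.symm)).trans (pa.trans
      ((η.symm.trans (bs.trans (η'.trans sa.symm))).trans pa.symm))) := by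
  simp [hq_trans, hq_symm]

example (x₀ a0 a2 : X) (pa : Path x₀ a0) (p1 : Path a0 a2) (e : Path a0 a0) :
    hq pa ≫ hq e ≫ inv (hq pa) =
    (hq pa ≫ hq p1) ≫ ((inv (hq p1) ≫ hq e ≫ hq p1) ≫ inv (hq pa ≫ hq p1)) := by
  simp



/-- Cousin's lemma on the unit interval, with tags. -/
lemma cousin (ε : I → ℝ) (hε : ∀ t, 0 < ε t) :
    ∃ (n : ℕ) (t s : ℕ → I), t 0 = 0 ∧ t n = 1 ∧
      ∀ k, k < n → t k ≤ t (k+1) ∧ s k ∈ Icc (t k) (t (k+1)) ∧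
        ∀ u ∈ Icc (t k) (t (k+1)), |(u:ℝ) - s k| < ε (s k) := by
  set Good : I → Prop := fun x => ∃ (n : ℕ) (t s : ℕ → I), t 0 = 0 ∧ t n = x ∧
      ∀ k, k < n → t k ≤ t (k+1) ∧ s k ∈ Icc (t k) (t (k+1)) ∧
        ∀ u ∈ Icc (t k) (t (k+1)), |(u:ℝ) - s k| < ε (s k) with hGood
  suffices h : Good 1 from h
  set C : Set ℝ := {r | ∃ x : I, Good x ∧ (x:ℝ) = r} with hC
  have good0 : Good 0 := ⟨0, fun _ => 0, fun _ => 0, rfl, rfl,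
    fun k hk => absurd hk (Nat.not_lt_zero k)⟩
  have h0C : (0:ℝ) ∈ C := ⟨0, good0, rfl⟩
  have hne : C.Nonempty := ⟨0, h0C⟩
  have hbdd : BddAbove C := ⟨1, by rintro r ⟨x, _, rfl⟩; exact x.2.2⟩
  set m' : ℝ := sSup C with hm'
  have hm'0 : 0 ≤ m' := le_csSup hbdd h0C
  have hm'1 : m' ≤ 1 := csSup_le hne (by rintro r ⟨x, _, rfl⟩; exact x.2.2)
  set m : I := ⟨m', hm'0, hm'1⟩ with hmdef
  have hεm := hε m
  obtain ⟨r, hrC, hr⟩ : ∃ r ∈ C, m' - ε m / 2 < r :=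
    exists_lt_of_lt_csSup hne (by linarith)
  obtain ⟨x, hGx, hxr⟩ := hrC
  have hrx : m' - ε m / 2 < (x:ℝ) := by rw [hxr]; exact hr
  have hxm : (x:ℝ) ≤ m' := by rw [hxr]; exact le_csSup hbdd ⟨x, hGx, hxr⟩
  have hy0 : 0 ≤ min (m' + ε m / 2) 1 := le_min (by linarith) zero_le_one
  set y : I := ⟨min (m' + ε m / 2) 1, hy0, min_le_right _ _⟩ with hydef
  have hy' : (y:ℝ) ≤ m' + ε m / 2 := min_le_left _ _
  have hxy : x ≤ y := by
    rw [← Subtype.coe_le_coe]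
    exact le_min (by linarith) x.2.2
  have hmy : m ≤ y := by
    rw [← Subtype.coe_le_coe]
    exact le_min (by linarith) hm'1
  have hGy : Good y := by
    obtain ⟨n, t, s, ht0, htn, hcond⟩ := hGx
    refine ⟨n + 1, fun k => if k ≤ n then t k else y,
      fun k => if k < n then s k else m, by simp [ht0], by simp, ?_⟩
    intro k hk
    rcases Nat.lt_or_ge k n with hkn | hkn
    · have h1 : k ≤ n := hkn.le
      have h2 : k + 1 ≤ n := hkn
      simp only [if_pos h1, if_pos h2, if_pos hkn]
      exact hcond k hkn
    · have hkeq : k = n := by omega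
      subst hkeq
      have h2 : ¬ (k + 1 ≤ k) := by omega
      simp only [le_refl, if_true, if_neg h2, lt_irrefl, if_false, if_pos]
      rw [htn]
      refine ⟨hxy, ⟨?_, hmy⟩, ?_⟩
      · rw [← Subtype.coe_le_coe]; exact hxm
      · rintro u ⟨hu1, hu2⟩
        have hu1' : (x:ℝ) ≤ u := hu1
        have hu2' : (u:ℝ) ≤ y := hu2
        rw [abs_lt]
        constructor <;> linarith
  have hyC : (y:ℝ) ∈ C := ⟨y, hGy, rfl⟩
  have hy_le : (y:ℝ) ≤ m' := le_csSup hbdd hyC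
  have h1m : min (m' + ε m / 2) 1 ≤ m' := hy_le
  have hmin : min (m' + ε m / 2) 1 = 1 := by
    rcases le_or_gt (m' + ε m / 2) 1 with h | h
    · exfalso; rw [min_eq_left h] at h1m; linarith
    · exact min_eq_right h.le
  have hyeq : y = (1:I) := Subtype.ext hmin
  rw [hyeq] at hGy
  exact hGy



section Dir1
variable {X : Type u} [TopologicalSpace X]

lemma exists_fl_rep (x : X) (a : FundamentalGroup X x) : ∃ α : Path x x, fl α = a := by
  obtain ⟨p, hp⟩ := Quotient.exists_rep a
  exact ⟨p, hp⟩

lemma pmul_one' (x : X) (a : FundamentalGroup X x) : pmul a (fl (Path.refl x)) = a := by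
  rw [fl_refl, pmul_eq, one_mul]

lemma qtop_to_wh (x₀ : X) (H : Subgroup (FundamentalGroup X x₀))
    (hqt : @IsClosed _ (qtopPi1 x₀) (H : Set (FundamentalGroup X x₀))) :
    @IsClosed _ (whPi1 x₀) (H : Set (FundamentalGroup X x₀)) := by
  classical
  rw [← @isOpen_compl_iff _ _ (whPi1 x₀)]
  have hop : IsOpen {p : Path x₀ x₀ | fl p ∉ H} := by
    have h2 : @IsOpen _ (qtopPi1 x₀) ((H : Set (FundamentalGroup X x₀)))ᶜ :=
      (@isOpen_compl_iff _ _ (qtopPi1 x₀)).mpr hqt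
    unfold qtopPi1 at h2
    rw [isOpen_coinduced] at h2
    exact h2
  have main : ∀ a : FundamentalGroup X x₀, a ∉ H → ∃ U : Set X, IsOpen U ∧ x₀ ∈ U ∧
      ∀ γ : Path x₀ x₀, range ⇑γ ⊆ U → pmul a (fl γ) ∉ H := by
    intro a ha
    obtain ⟨α, hα⟩ := exists_fl_rep x₀ a
    set α' : Path x₀ x₀ := α.trans (Path.refl x₀) with hα'def
    have hflα' : fl α' = a := by
      rw [← hα]
      apply fl_eq_of_hq
      rw [hq_trans, hq_refl, Category.comp_id]
    have hmem : α' ∈ {p : Path x₀ x₀ | fl p ∉ H} := by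
      rw [mem_setOf_eq, hflα']; exact ha
    obtain ⟨O, hOopen, hOpre⟩ := isOpen_induced_iff.mp hop
    have hbasis := TopologicalSpace.isTopologicalBasis_of_subbasis
      (ContinuousMap.compactOpen_eq (X := I) (Y := X))
    have hmemO : (α' : C(I,X)) ∈ O := by
      rw [← hOpre] at hmem; exact hmem
    obtain ⟨B, hB, hmemB, hBsub⟩ := hbasis.exists_subset_of_mem_open hmemO hOopen
    obtain ⟨F, ⟨hFfin, hFsub⟩, rfl⟩ := hB
    have hKV : ∀ S ∈ F, ∃ (K : Set I) (V : Set X), IsCompact K ∧ IsOpen V ∧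
        S = {f : C(I,X) | MapsTo f K V} := by
      intro S hS
      obtain ⟨K, hK, V, hV, hSeq⟩ := hFsub hS
      exact ⟨K, V, hK, hV, hSeq.symm⟩
    choose! K V hKc hVo hSeq using hKV
    set W : Set (C(I, X)) → Set X := fun S =>
      if ∃ u ∈ K S, 1/2 < (u:ℝ) then V S else univ with hWdef
    refine ⟨⋂ S ∈ F, W S, ?_, ?_, ?_⟩
    · exact hFfin.isOpen_biInter fun S hS => by
        simp only [hWdef]; split_ifs with h
        · exact hVo S hS
        · exact isOpen_univ
    · refine mem_iInter₂.mpr fun S hS => ?_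
      simp only [hWdef]
      split_ifs with h
      · obtain ⟨u, huK, hu2⟩ := h
        have hα'S : MapsTo (α' : C(I,X)) (K S) (V S) := by
          have := mem_sInter.mp hmemB S hS
          rwa [hSeq S hS] at this
        have : α' u = x₀ := by
          rw [hα'def, Path.trans_apply, dif_neg (by exact not_le.mpr hu2)]
          simp
        rw [← this]
        exact hα'S huK
      · exact mem_univ _
    · intro γ hγ hcon
      have hmem2 : (↑(α.trans γ) : C(I,X)) ∈ ⋂₀ F := by
        refine mem_sInter.mpr fun S hS => ?_
        rw [hSeq S hS]
        intro u huK
        have hα'S : MapsTo (α' : C(I,X)) (K S) (V S) := by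
          have := mem_sInter.mp hmemB S hS
          rwa [hSeq S hS] at this
        rcases le_or_gt (u:ℝ) (1/2) with h | h
        · have e1 : (α.trans γ) u = α' u := by
            rw [hα'def, Path.trans_apply, Path.trans_apply]
            split_ifs with hh
            · rfl
            · exact absurd h hh
          show (α.trans γ) u ∈ V S
          rw [e1]
          exact hα'S huK
        · have e1 : (α.trans γ) u ∈ range ⇑γ := by
            rw [Path.trans_apply, dif_neg (by exact not_le.mpr h)]
            exact mem_range_self _
          have hWS : W S = V S := by simp only [hWdef]; exact if_pos ⟨u, huK, h⟩
          have : range ⇑γ ⊆ V S := by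
            rw [← hWS]
            exact hγ.trans (biInter_subset_of_mem hS)
          exact this e1
      have : fl (α.trans γ) ∉ H := by
        have h3 : (↑(α.trans γ) : C(I,X)) ∈ O := hBsub hmem2
        have h4 : (α.trans γ) ∈ {p : Path x₀ x₀ | fl p ∉ H} := by
          rw [← hOpre]; exact h3
        exact h4
      rw [← hα, ← fl_trans] at hcon
      exact this hcon
  choose! U hUo hUm hUp using main
  have hcov : ((H : Set (FundamentalGroup X x₀)))ᶜ =
      ⋃ a : {a : FundamentalGroup X x₀ // a ∉ H},
        {b | ∃ γ : Path x₀ x₀, range ⇑γ ⊆ U a.1 ∧ b = pmul a.1 (fl γ)} := by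
    apply Subset.antisymm
    · intro a ha
      exact mem_iUnion.mpr ⟨⟨a, ha⟩, Path.refl x₀, by
        simp [(hUm a ha)], (pmul_one' x₀ a).symm⟩
    · rintro b hb
      obtain ⟨a, γ, hγ, rfl⟩ := mem_iUnion.mp hb
      exact hUp a.1 a.2 γ hγ
  rw [hcov]
  refine @isOpen_iUnion _ _ (whPi1 x₀) _ fun a => ?_
  exact TopologicalSpace.isOpen_generateFrom_of_mem
    ⟨a.1, U a.1, hUo a.1 a.2, hUm a.1 a.2, rfl⟩

end Dir1

section Dir2
variable {X : Type u} [TopologicalSpace X]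

lemma pmul_assoc {x : X} (a b c : FundamentalGroup X x) :
    pmul (pmul a b) c = pmul a (pmul b c) := by
  simp [pmul_eq, mul_assoc]

lemma wh_basic_extract (x₀ : X) (H : Subgroup (FundamentalGroup X x₀))
    (hwh : @IsClosed _ (whPi1 x₀) (H : Set (FundamentalGroup X x₀)))
    (a : FundamentalGroup X x₀) (ha : a ∉ H) :
    ∃ U : Set X, IsOpen U ∧ x₀ ∈ U ∧
      ∀ γ : Path x₀ x₀, range ⇑γ ⊆ U → pmul a (fl γ) ∉ H := by
  classical
  letI : TopologicalSpace (FundamentalGroup X x₀) := whPi1 x₀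
  have hwh' : IsOpen ((H : Set (FundamentalGroup X x₀))ᶜ) := isOpen_compl_iff.mpr hwh
  have heq : (inferInstance : TopologicalSpace (FundamentalGroup X x₀)) = generateFrom
      { S | ∃ (b : FundamentalGroup X x₀) (U : Set X), IsOpen U ∧ x₀ ∈ U ∧
          S = { c | ∃ γ : Path x₀ x₀, range ⇑γ ⊆ U ∧ c = pmul b (fl γ) } } := rfl
  have hbasis := TopologicalSpace.isTopologicalBasis_of_subbasis heq
  have hac : a ∈ (H : Set (FundamentalGroup X x₀))ᶜ := ha
  obtain ⟨B, hB, haB, hBsub⟩ := hbasis.exists_subset_of_mem_open hac hwh'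
  obtain ⟨F, ⟨hFfin, hFsub⟩, rfl⟩ := hB
  have hKV : ∀ S ∈ F, ∃ (b : FundamentalGroup X x₀) (US : Set X), IsOpen US ∧ x₀ ∈ US ∧
      S = { c | ∃ γ : Path x₀ x₀, range ⇑γ ⊆ US ∧ c = pmul b (fl γ) } := fun S hS => hFsub hS
  choose! bS US hUSo hUSm hSeq using hKV
  refine ⟨⋂ S ∈ F, US S, hFfin.isOpen_biInter (fun S hS => hUSo S hS), 
    mem_iInter₂.mpr fun S hS => hUSm S hS, ?_⟩
  intro γ hγ hcon
  have hmem : pmul a (fl γ) ∈ ⋂₀ F := by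
    refine mem_sInter.mpr fun S hS => ?_
    have haS := mem_sInter.mp haB S hS
    rw [hSeq S hS] at haS ⊢
    obtain ⟨δ, hδ, rfl⟩ := haS
    refine ⟨δ.trans γ, ?_, by rw [pmul_assoc, fl_trans]⟩
    rw [Path.trans_range]
    exact union_subset hδ (hγ.trans (biInter_subset_of_mem hS))
  exact (hBsub hmem) hcon


/-- `η⁻¹ ⬝ bs ⬝ η' ⬝ sa⁻¹`, the small discrepancy loop. -/
noncomputable def eLoopD {a b a' b' : X} (η : Path b a) (η' : Path b' a')
    (bs : Path b b') (sa : Path a a') : Path a a :=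
  η.symm.trans (bs.trans (η'.trans sa.symm))

/-- conjugation of a loop along a path. -/
noncomputable def econjD {a c : X} (p : Path a c) (e : Path a a) : Path c c :=
  p.symm.trans (e.trans p)

/-- a loop at `a` whiskered back to the base point. -/
noncomputable def wconjD {x a : X} (p : Path x a) (e : Path a a) : Path x x :=
  p.trans (e.trans p.symm)

/-- `pb ⬝ η ⬝ pa⁻¹`. -/
noncomputable def bloopD {x b a : X} (pb : Path x b) (η : Path b a) (pa : Path x a) :
    Path x x :=
  pb.trans (η.trans pa.symm)

lemma wh_to_qtop [PathConnectedSpace X] [LocallyPathConnectedSpace X] (x₀ : X)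
    (H : Subgroup (FundamentalGroup X x₀)) (hH : H.Normal) (hslt : IsHSLTAt x₀ H)
    (hwh : @IsClosed _ (whPi1 x₀) (H : Set (FundamentalGroup X x₀))) :
    @IsClosed _ (qtopPi1 x₀) (H : Set (FundamentalGroup X x₀)) := by
  classical
  rw [← @isOpen_compl_iff _ _ (qtopPi1 x₀)]
  show @IsOpen _ (qtopPi1 x₀) _
  unfold qtopPi1
  rw [isOpen_coinduced]
  rw [isOpen_iff_forall_mem_open]
  intro α hα
  rw [mem_preimage, mem_compl_iff, SetLike.mem_coe] at hα
  obtain ⟨U, hUo, hUm, hU⟩ := wh_basic_extract x₀ H hwh (fl α) hα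
  -- SLT data for each point of α
  have hsltspec : ∀ τ : I, ∃ V : Set X, IsOpen V ∧ α τ ∈ V ∧
      ∀ β : Path (α τ) (α τ), range ⇑β ⊆ V → ∃ γ : Path x₀ x₀, range ⇑γ ⊆ U ∧
        fl (((pre α τ).trans (β.trans (pre α τ).symm)).trans γ.symm) ∈ H :=
    fun τ => hslt (α τ) (pre α τ) U hUo hUm
  choose V hVo hVm hVtr using hsltspec
  have hWex : ∀ τ : I, ∃ W : Set X, IsOpen W ∧ α τ ∈ W ∧ IsPathConnected W ∧ W ⊆ V τ := by
    intro τ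
    obtain ⟨W, ⟨hWo, hWm, hWpc⟩, hWsub⟩ := (isOpen_isPathConnected_basis (α τ)).mem_iff.mp
      ((hVo τ).mem_nhds (hVm τ))
    exact ⟨W, hWo, hWm, hWpc, hWsub⟩
  choose W hWo hWm hWpc hWV using hWex
  have hballex : ∀ τ : I, ∃ ε : ℝ, 0 < ε ∧ ∀ u : I, dist u τ < ε → α u ∈ W τ := by
    intro τ
    have h1 : (⇑α ⁻¹' W τ) ∈ nhds τ := ((hWo τ).preimage α.continuous).mem_nhds (hWm τ)
    obtain ⟨ε, hε, hball⟩ := Metric.mem_nhds_iff.mp h1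
    exact ⟨ε, hε, fun u hu => hball hu⟩
  choose ε hε hball using hballex
  obtain ⟨n, t, s, ht0, htn, hpart⟩ := cousin ε hε
  have hmono : ∀ k, k < n → t k ≤ t (k+1) := fun k hk => (hpart k hk).1
  have htag : ∀ k, k < n → s k ∈ Icc (t k) (t (k+1)) := fun k hk => (hpart k hk).2.1
  have hfine : ∀ k, k < n → ∀ u ∈ Icc (t k) (t (k+1)), α u ∈ W (s k) := by
    intro k hk u hu
    apply hball
    rw [Subtype.dist_eq, Real.dist_eq]
    exact (hpart k hk).2.2 u hu
  have hn : 0 < n := by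
    rcases Nat.eq_zero_or_pos n with h | h
    · exfalso
      rw [h] at htn
      have : (0 : I) = 1 := ht0.symm.trans htn
      have h2 : ((0 : I) : ℝ) = ((1 : I) : ℝ) := congrArg _ this
      norm_num at h2
    · exact h
  -- junction sets
  have hQex : ∀ k, 0 < k → k < n → ∃ Q : Set X, IsOpen Q ∧ α (t k) ∈ Q ∧
      IsPathConnected Q ∧ Q ⊆ W (s (k-1)) ∩ W (s k) := by
    intro k h0 hkn
    have hk1 : k - 1 < n := by omega
    have hsucc : k - 1 + 1 = k := by omega
    have h1 : α (t k) ∈ W (s (k-1)) := by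
      apply hfine (k-1) hk1
      rw [hsucc]
      exact ⟨by rw [← hsucc]; exact hmono (k-1) hk1, le_refl _⟩
    have h2 : α (t k) ∈ W (s k) := hfine k hkn (t k) ⟨le_refl _, hmono k hkn⟩
    obtain ⟨Q, ⟨hQo, hQm, hQpc⟩, hQsub⟩ := (isOpen_isPathConnected_basis (α (t k))).mem_iff.mp
      (((hWo (s (k-1))).inter (hWo (s k))).mem_nhds ⟨h1, h2⟩)
    exact ⟨Q, hQo, hQm, hQpc, hQsub⟩
  choose! Q hQo hQm hQpc hQsub using hQex
  -- the compact-open neighborhood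
  refine ⟨{p : Path x₀ x₀ | (∀ k, k < n → MapsTo ⇑p (Icc (t k) (t (k+1))) (W (s k))) ∧
      (∀ k, 0 < k → k < n → p (t k) ∈ Q k)}, ?_, ?_, ?_⟩
  · -- subset of fl ⁻¹' Hᶜ
    rintro β ⟨hβ1, hβ2⟩
    rw [mem_preimage, mem_compl_iff, SetLike.mem_coe]
    intro hβH
    have hβ0 : β (t 0) = x₀ := by rw [ht0]; exact β.source
    have hα0 : α (t 0) = x₀ := by rw [ht0]; exact α.source
    have hβn : β (t n) = x₀ := by rw [htn]; exact β.target
    have hαn : α (t n) = x₀ := by rw [htn]; exact α.target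
    -- connectors
    have hηex : ∀ k, ∃ η : Path (β (t k)) (α (t k)),
        ((k = 0 ∨ k = n) → ∀ v, η v = β (t k)) ∧
        (0 < k → k < n → range ⇑η ⊆ Q k) := by
      intro k
      by_cases hk0 : k = 0
      · subst hk0
        refine ⟨(Path.refl x₀).cast hβ0 hα0, fun _ v => ?_, fun h0 => absurd h0 (by omega)⟩
        rw [Path.cast_coe, Path.refl_apply, hβ0]
      · by_cases hkn : k = n
        · subst hkn
          refine ⟨(Path.refl x₀).cast hβn hαn, fun _ v => ?_, fun h0 hlt => absurd hlt (by omega)⟩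
          rw [Path.cast_coe, Path.refl_apply, hβn]
        · by_cases hklt : k < n
          · have h0 : 0 < k := by omega
            have hj : JoinedIn (Q k) (β (t k)) (α (t k)) :=
              (hQpc k h0 hklt).joinedIn _ (hβ2 k h0 hklt) _ (hQm k h0 hklt)
            refine ⟨hj.somePath, fun hc => absurd hc (by omega), fun _ _ => ?_⟩
            rintro - ⟨v, rfl⟩
            exact hj.somePath_mem v
          · exact ⟨PathConnectedSpace.somePath _ _, fun hc => absurd hc (by omega),
              fun _ hlt => absurd hlt hklt⟩
    choose η hηc hηQ using hηex
    have hηW1 : ∀ k, k < n → range ⇑(η k) ⊆ W (s k) := by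
      intro k hk
      by_cases h0 : 0 < k
      · exact (hηQ k h0 hk).trans ((hQsub k h0 hk).trans inter_subset_right)
      · have hk0 : k = 0 := by omega
        subst hk0
        rintro - ⟨v, rfl⟩
        rw [hηc 0 (Or.inl rfl) v, hβ0, ← hα0]
        exact hfine 0 hk (t 0) ⟨le_refl _, hmono 0 hk⟩
    have hηW2 : ∀ k, 0 < k → k ≤ n → range ⇑(η k) ⊆ W (s (k-1)) := by
      intro k h0 hk
      by_cases hklt : k < n
      · exact (hηQ k h0 hklt).trans ((hQsub k h0 hklt).trans inter_subset_left)
      · have hkn : k = n := by omega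
        subst hkn
        have hk1 : k - 1 < k := by omega
        have hsucc : k - 1 + 1 = k := by omega
        rintro - ⟨v, rfl⟩
        rw [hηc k (Or.inr rfl) v, hβn, ← hαn]
        apply hfine (k-1) (by omega)
        rw [hsucc]
        exact ⟨by rw [← hsucc]; exact hmono (k-1) (by omega), le_refl _⟩
    -- the inductive transfer
    have key : ∀ k, k ≤ n → ∃ (g : Path x₀ x₀) (h : FundamentalGroup X x₀),
        range ⇑g ⊆ U ∧ h ∈ H ∧
        fl (bloopD (pre β (t k)) (η k) (pre α (t k))) = fl g * h := by
      intro k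
      induction k with
      | zero =>
        intro _
        refine ⟨Path.refl x₀, 1, by rw [Path.refl_range]; exact singleton_subset_iff.mpr hUm,
          one_mem H, ?_⟩
        rw [fl_refl, one_mul]
        show hq _ = 𝟙 _
        simp only [bloopD, hq_trans, hq_symm]
        rw [hq_const (pre β (t 0)) (pre_first β ht0), hq_const (η 0) (hηc 0 (Or.inl rfl)),
          hq_const (pre α (t 0)) (pre_first α ht0)]
        simp
      | succ k ih =>
        intro hk1
        have hk : k < n := by omega
        obtain ⟨g, h, hg, hh, heq⟩ := ih (by omega)
        have htk : t k ≤ s k := (htag k hk).1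
        have hsk : s k ≤ t (k+1) := (htag k hk).2
        have hre2 : range ⇑(econjD (seg α (t k) (s k))
            (eLoopD (η k) (η (k+1)) (seg β (t k) (t (k+1))) (seg α (t k) (t (k+1)))))
            ⊆ V (s k) := by
          have hsub1 : range ⇑(seg α (t k) (s k)) ⊆ W (s k) := by
            refine (seg_range α htk).trans ?_
            rintro - ⟨u, hu, rfl⟩
            exact hfine k hk u ⟨hu.1, hu.2.trans hsk⟩
          have hsub2 : range ⇑(seg β (t k) (t (k+1))) ⊆ W (s k) := by
            refine (seg_range β (hmono k hk)).trans ?_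
            rintro - ⟨u, hu, rfl⟩
            exact hβ1 k hk hu
          have hsub3 : range ⇑(seg α (t k) (t (k+1))) ⊆ W (s k) := by
            refine (seg_range α (hmono k hk)).trans ?_
            rintro - ⟨u, hu, rfl⟩
            exact hfine k hk u hu
          have hsub4 : range ⇑(η k) ⊆ W (s k) := hηW1 k hk
          have hsub5 : range ⇑(η (k+1)) ⊆ W (s k) := by
            have h25 := hηW2 (k+1) (by omega) (by omega)
            simpa using h25
          refine subset_trans ?_ (hWV (s k))
          simp only [econjD, eLoopD, Path.trans_range, Path.symm_range]
          exact union_subset hsub1 (union_subset (union_subset hsub4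
            (union_subset hsub2 (union_subset hsub5 hsub3))) hsub1)
        obtain ⟨γ, hγU, hγH⟩ := hVtr (s k) _ hre2
        have hγH' : fl ((wconjD (pre α (s k)) (econjD (seg α (t k) (s k))
            (eLoopD (η k) (η (k+1)) (seg β (t k) (t (k+1)))
              (seg α (t k) (t (k+1)))))).trans γ.symm) ∈ H := hγH
        have hpeel := fl_peel (wconjD (pre α (s k)) (econjD (seg α (t k) (s k))
            (eLoopD (η k) (η (k+1)) (seg β (t k) (t (k+1)))
              (seg α (t k) (t (k+1)))))) γ
        have hD : fl (wconjD (pre α (t k))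
              (eLoopD (η k) (η (k+1)) (seg β (t k) (t (k+1))) (seg α (t k) (t (k+1))))) =
            fl (wconjD (pre α (s k)) (econjD (seg α (t k) (s k))
              (eLoopD (η k) (η (k+1)) (seg β (t k) (t (k+1)))
                (seg α (t k) (t (k+1)))))) := by
          apply fl_eq_of_hq
          simp only [wconjD, econjD, eLoopD, hq_trans, hq_symm]
          rw [hq_pre_split α (t k) (s k)]
          simp
        have hstep : fl (bloopD (pre β (t (k+1))) (η (k+1)) (pre α (t (k+1)))) =
            fl (wconjD (pre α (t k))
              (eLoopD (η k) (η (k+1)) (seg β (t k) (t (k+1))) (seg α (t k) (t (k+1))))) *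
            fl (bloopD (pre β (t k)) (η k) (pre α (t k))) := by
          rw [← fl_trans']
          apply fl_eq_of_hq
          simp only [bloopD, wconjD, eLoopD, hq_trans, hq_symm]
          rw [hq_pre_split β (t k) (t (k+1)), hq_pre_split α (t k) (t (k+1))]
          simp
        refine ⟨g.trans γ, (fl g)⁻¹ * fl ((wconjD (pre α (s k)) (econjD (seg α (t k) (s k))
            (eLoopD (η k) (η (k+1)) (seg β (t k) (t (k+1)))
              (seg α (t k) (t (k+1)))))).trans γ.symm) * fl g * h, ?_, ?_, ?_⟩
        · rw [Path.trans_range]; exact union_subset hg hγU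
        · refine mul_mem ?_ hh
          have hc := hH.conj_mem _ hγH' (fl g)⁻¹
          rw [inv_inv] at hc
          exact hc
        · rw [hstep, heq, hD, hpeel, fl_trans' g γ]
          group
    -- conclude
    obtain ⟨g, h, hg, hh, heq⟩ := key n (le_refl n)
    have hBn : fl (β.trans α.symm) = fl g * h := by
      rw [← heq]
      apply fl_eq_of_hq
      simp only [bloopD, hq_trans, hq_symm]
      rw [hq_pre_last β htn, hq_pre_last α htn, hq_const (η n) (hηc n (Or.inr rfl))]
      simp
    have h1 : fl (β.trans α.symm) = (fl α)⁻¹ * fl β := by rw [fl_trans', fl_symm]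
    rw [h1] at hBn
    have h2 : fl α * fl g = fl β * h⁻¹ := by
      have hgeq : fl g = (fl α)⁻¹ * fl β * h⁻¹ := by rw [hBn]; group
      rw [hgeq]; group
    have h3 : fl α * fl g ∈ H := by rw [h2]; exact mul_mem hβH (inv_mem hh)
    have h4 : fl g * fl α ∈ H := by
      have hc := hH.conj_mem _ h3 (fl α)⁻¹
      have e : fl g * fl α = (fl α)⁻¹ * (fl α * fl g) * ((fl α)⁻¹)⁻¹ := by group
      rw [e]; exact hc
    exact hU g hg (by rw [pmul_eq]; exact h4)
  · -- openness
    have e : {p : Path x₀ x₀ | (∀ k, k < n → MapsTo ⇑p (Icc (t k) (t (k+1))) (W (s k))) ∧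
        (∀ k, 0 < k → k < n → p (t k) ∈ Q k)} =
        (⋂ k ∈ Finset.range n, {p : Path x₀ x₀ | MapsTo ⇑p (Icc (t k) (t (k+1))) (W (s k))}) ∩
        (⋂ k ∈ Finset.range n, {p : Path x₀ x₀ | 0 < k → p (t k) ∈ Q k}) := by
      ext p
      simp only [mem_setOf_eq, mem_inter_iff, mem_iInter, Finset.mem_range]
      tauto
    rw [e]
    apply IsOpen.inter
    · refine isOpen_biInter_finset fun k hk => ?_
      have e2 : {p : Path x₀ x₀ | MapsTo ⇑p (Icc (t k) (t (k+1))) (W (s k))} =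
          Path.toContinuousMap ⁻¹' {f : C(I, X) | MapsTo ⇑f (Icc (t k) (t (k+1))) (W (s k))} := rfl
      rw [e2]
      exact (ContinuousMap.isOpen_setOf_mapsTo isClosed_Icc.isCompact
        (hWo (s k))).preimage continuous_induced_dom
    · refine isOpen_biInter_finset fun k hk => ?_
      rw [Finset.mem_range] at hk
      by_cases h0 : 0 < k
      · have e2 : {p : Path x₀ x₀ | 0 < k → p (t k) ∈ Q k} =
            (fun p : Path x₀ x₀ => p (t k)) ⁻¹' (Q k) := by
          ext p; simp [h0]
        rw [e2]
        refine (hQo k h0 hk).preimage ?_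
        exact continuous_eval_const (t k)
      · have e2 : {p : Path x₀ x₀ | 0 < k → p (t k) ∈ Q k} = univ := by
          ext p; simp [h0]
        rw [e2]
        exact isOpen_univ
  · -- α is a member
    refine ⟨fun k hk u hu => hfine k hk u hu, fun k h0 hk => hQm k h0 hk⟩

end Dir2


/-- Let `H` be a normal subgroup of `π₁(X, x₀)` and let `X` be a locally
path-connected space which is `H`-SLT at `x₀`. Then `H` is a closed subgroup of
`π₁^qtop(X, x₀)` if and only if `H` is a closed subgroup of `π₁^wh(X, x₀)`. -/
theorem statement5 {X : Type u} [TopologicalSpace X] [PathConnectedSpace X]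
    [LocallyPathConnectedSpace X] (x₀ : X)
    (H : Subgroup (FundamentalGroup X x₀)) (hH : H.Normal) (hslt : IsHSLTAt x₀ H) :
    @IsClosed _ (qtopPi1 x₀) (H : Set (FundamentalGroup X x₀)) ↔
      @IsClosed _ (whPi1 x₀) (H : Set (FundamentalGroup X x₀)) := by
  exact ⟨fun hc => qtop_to_wh x₀ H hc, fun hc => wh_to_qtop x₀ H hH hslt hc⟩

end SLTF
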